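/- Let (u, v, pu, pv) solve the FLRW null geodesic system on an interval I with angular momentum L = 0, and suppose pu·pv = 0 at some point of I (the mass shell relation for L = 0). Then the functions t·pu and t·pv are each constant on I. -/

import Mathlib

/-- The time coordinate `t = (v+u)²/4` along a curve in double null coordinates. -/
noncomputable def tOf (u v : ℝ → ℝ) (s : ℝ) : ℝ := (v s + u s) ^ 2 / 4

/-- The radial coordinate `r = v − u` along a curve in double null coordinates. -/
noncomputable def rOf (u v : ℝ → ℝ) (s : ℝ) : ℝ := v s - u s

/-- **The FLRW null geodesic system** with angular momentum `L` on a set `I ⊆ ℝ`: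
`u' = pu`, `v' = pv`,
`pu' = −t^{−1/2}·pu² − (1/2)(1/(2t^{1/2}) + 1/r)·L²/(t²r²)`,
`pv' = −t^{−1/2}·pv² − (1/2)(1/(2t^{1/2}) − 1/r)·L²/(t²r²)`,
where `t = (v+u)²/4` and `r = v−u` are required to satisfy `v+u > 0`, `r > 0` on `I`,
and `pu ≥ 0`, `pv ≥ 0` on `I`. -/
def FLRWGeodesicSystem (I : Set ℝ) (L : ℝ) (u v pu pv : ℝ → ℝ) : Prop :=
  (∀ s ∈ I, 0 < v s + u s) ∧
  (∀ s ∈ I, 0 < rOf u v s) ∧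
  (∀ s ∈ I, 0 ≤ pu s) ∧
  (∀ s ∈ I, 0 ≤ pv s) ∧
  (∀ s ∈ I, HasDerivAt u (pu s) s) ∧
  (∀ s ∈ I, HasDerivAt v (pv s) s) ∧
  (∀ s ∈ I, HasDerivAt pu
    (-(pu s) ^ 2 / Real.sqrt (tOf u v s)
      - 1 / 2 * (1 / (2 * Real.sqrt (tOf u v s)) + 1 / rOf u v s) * L ^ 2
          / ((tOf u v s) ^ 2 * (rOf u v s) ^ 2)) s) ∧
  (∀ s ∈ I, HasDerivAt pv
    (-(pv s) ^ 2 / Real.sqrt (tOf u v s)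
      - 1 / 2 * (1 / (2 * Real.sqrt (tOf u v s)) - 1 / rOf u v s) * L ^ 2
          / ((tOf u v s) ^ 2 * (rOf u v s) ^ 2)) s)

private lemma constOn {I : Set ℝ} (hI : Convex ℝ I) {f : ℝ → ℝ}
    (hf : ∀ s ∈ I, HasDerivAt f 0 s) :
    ∀ s₁ ∈ I, ∀ s₂ ∈ I, f s₁ = f s₂ := by
  intro s₁ h₁ s₂ h₂
  have h := Convex.norm_image_sub_le_of_norm_hasDerivWithin_le (f' := fun _ => (0:ℝ))
    (C := 0) (fun x hx => (hf x hx).hasDerivWithinAt) (fun x _ => by simp) hI h₁ h₂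
  simp only [zero_mul, norm_le_zero_iff, sub_eq_zero] at h
  exact h.symm

/-- **Radial null geodesics in FLRW.**
If `(u,v,pu,pv)` solves the FLRW null geodesic system on an interval `I` with angular
momentum `L = 0`, and `pu·pv = 0` at some point of `I` (the mass shell relation for
`L = 0`), then `t·pu` and `t·pv` are each constant on `I`. -/
theorem flrw_radial_geodesic_constants (I : Set ℝ) (hI : Convex ℝ I)
    (u v pu pv : ℝ → ℝ) (hsys : FLRWGeodesicSystem I 0 u v pu pv)
    (hms : ∃ s ∈ I, pu s * pv s = 0) :
    (∀ s₁ ∈ I, ∀ s₂ ∈ I, tOf u v s₁ * pu s₁ = tOf u v s₂ * pu s₂) ∧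
    (∀ s₁ ∈ I, ∀ s₂ ∈ I, tOf u v s₁ * pv s₁ = tOf u v s₂ * pv s₂) := by
  obtain ⟨hsum, hr, hpu0, hpv0, hu, hv, hpu, hpv⟩ := hsys
  have hane : ∀ s ∈ I, v s + u s ≠ 0 := fun s hs => ne_of_gt (hsum s hs)
  have hq : ∀ s ∈ I, Real.sqrt (tOf u v s) = (v s + u s) / 2 := by
    intro s hs
    have h1 : tOf u v s = ((v s + u s) / 2) ^ 2 := by unfold tOf; ring
    rw [h1, Real.sqrt_sq (by linarith [hsum s hs])]
  -- simplified derivatives for L = 0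
  have hpu' : ∀ s ∈ I, HasDerivAt pu (-(2 * pu s ^ 2 / (v s + u s))) s := by
    intro s hs
    have h := hpu s hs
    have e : (-(pu s) ^ 2 / Real.sqrt (tOf u v s)
        - 1 / 2 * (1 / (2 * Real.sqrt (tOf u v s)) + 1 / rOf u v s) * (0:ℝ) ^ 2
            / ((tOf u v s) ^ 2 * (rOf u v s) ^ 2)) = -(2 * pu s ^ 2 / (v s + u s)) := by
      rw [hq s hs]
      have ha := hane s hs
      field_simp
      ring
    rwa [e] at h
  have hpv' : ∀ s ∈ I, HasDerivAt pv (-(2 * pv s ^ 2 / (v s + u s))) s := by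
    intro s hs
    have h := hpv s hs
    have e : (-(pv s) ^ 2 / Real.sqrt (tOf u v s)
        - 1 / 2 * (1 / (2 * Real.sqrt (tOf u v s)) - 1 / rOf u v s) * (0:ℝ) ^ 2
            / ((tOf u v s) ^ 2 * (rOf u v s) ^ 2)) = -(2 * pv s ^ 2 / (v s + u s)) := by
      rw [hq s hs]
      have ha := hane s hs
      field_simp
      ring
    rwa [e] at h
  have ht' : ∀ s ∈ I, HasDerivAt (tOf u v) ((v s + u s) * (pu s + pv s) / 2) s := by
    intro s hs
    have h := (((hv s hs).add (hu s hs)).pow 2).div_const 4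
    refine h.congr_deriv ?_
    simp only [Pi.add_apply]
    push_cast
    ring
  -- t·pu·pv has vanishing derivative, hence is constant, hence pu·pv ≡ 0
  have hG : ∀ s ∈ I, HasDerivAt (fun s => tOf u v s * pu s * pv s) 0 s := by
    intro s hs
    have h := (((ht' s hs).mul (hpu' s hs)).mul (hpv' s hs))
    have e : ((v s + u s) * (pu s + pv s) / 2 * pu s
          + tOf u v s * -(2 * pu s ^ 2 / (v s + u s))) * pv s
          + tOf u v s * pu s * -(2 * pv s ^ 2 / (v s + u s)) = 0 := by
      unfold tOf
      have ha := hane s hs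
      field_simp
      ring
    exact h.congr_deriv e
  obtain ⟨s₀, hs₀, hms0⟩ := hms
  have htpos : ∀ s ∈ I, 0 < tOf u v s := by
    intro s hs
    have := hsum s hs
    unfold tOf
    positivity
  have hzero : ∀ s ∈ I, pu s * pv s = 0 := by
    intro s hs
    have h := constOn hI hG s hs s₀ hs₀
    have h0 : tOf u v s * (pu s * pv s) = 0 := by
      rw [← mul_assoc, h, mul_assoc, hms0, mul_zero]
    exact (mul_eq_zero.1 h0).resolve_left (ne_of_gt (htpos s hs))
  constructor
  · refine constOn hI ?_
    intro s hs
    have h := (ht' s hs).mul (hpu' s hs)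
    have e : (v s + u s) * (pu s + pv s) / 2 * pu s
        + tOf u v s * -(2 * pu s ^ 2 / (v s + u s)) = 0 := by
      have key : (v s + u s) * (pu s + pv s) / 2 * pu s
          + tOf u v s * -(2 * pu s ^ 2 / (v s + u s))
          = (v s + u s) / 2 * (pu s * pv s) := by
        unfold tOf
        have ha := hane s hs
        field_simp
        ring
      rw [key, hzero s hs, mul_zero]
    rwa [e] at h
  · refine constOn hI ?_
    intro s hs
    have h := (ht' s hs).mul (hpv' s hs)
    have e : (v s + u s) * (pu s + pv s) / 2 * pv s
        + tOf u v s * -(2 * pv s ^ 2 / (v s + u s)) = 0 := by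
      have key : (v s + u s) * (pu s + pv s) / 2 * pv s
          + tOf u v s * -(2 * pv s ^ 2 / (v s + u s))
          = (v s + u s) / 2 * (pu s * pv s) := by
        unfold tOf
        have ha := hane s hs
        field_simp
        ring
      rw [key, hzero s hs, mul_zero]
    rwa [e] at h
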